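/- For every dimension d ≥ 1, every probability measure P_X on ℝ^d, every Markov kernel P_{Y|X}, and every integer M ≥ 2, the minimum mean squared error is lower bounded by the Ziv–Zakai bound with valley-filling: mmse(X|Y) ≥ ZZ̄(P_X, P_{Y|X}, M). -/

import Mathlib

open MeasureTheory ProbabilityTheory ENNReal

noncomputable section

variable {d : ℕ} {𝒴 : Type*} [MeasurableSpace 𝒴]

/-- Law of `X - u` when `X ∼ P`. -/
def shiftLaw (P : Measure (Fin d → ℝ)) (u : Fin d → ℝ) : Measure (Fin d → ℝ) :=
  P.map (· - u)

/-- The mixture measure `μ_U = ∑_k P_{X-u_k}`. -/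
def mixMeasure (P : Measure (Fin d → ℝ)) {M : ℕ} (U : Fin M → Fin d → ℝ) :
    Measure (Fin d → ℝ) :=
  ∑ k : Fin M, shiftLaw P (U k)

/-- The prior `p_i(x) = dP_{X-u_i}/dμ_U (x)`. -/
def prior (P : Measure (Fin d → ℝ)) {M : ℕ} (U : Fin M → Fin d → ℝ) (i : Fin M)
    (x : Fin d → ℝ) : ℝ≥0∞ :=
  (shiftLaw P (U i)).rnDeriv (mixMeasure P U) x

/-- Minimum Bayes error probability of the `M`-ary hypothesis test where hypothesis `i`
has prior `p_i(x)` and observation law `κ(·|x+u_i)`. -/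
def bayesError (P : Measure (Fin d → ℝ)) (κ : Kernel (Fin d → ℝ) 𝒴) {M : ℕ}
    (U : Fin M → Fin d → ℝ) (x : Fin d → ℝ) : ℝ≥0∞ :=
  ⨅ (φ : 𝒴 → Fin M) (_ : Measurable φ),
    ∑ i : Fin M, prior P U i x * κ (x + U i) {y | φ y ≠ i}

/-- `h(t,i,M)`. -/
def hFun (P : Measure (Fin d → ℝ)) (κ : Kernel (Fin d → ℝ) 𝒴) (M : ℕ) (t : ℝ)
    (i : Fin d) : ℝ≥0∞ :=
  ⨆ (U : Fin M → Fin d → ℝ) (_ : ∀ k : Fin M, U k i = (k : ℝ) * t),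
    ∫⁻ x, bayesError P κ U x ∂(mixMeasure P U)

/-- Ziv-Zakai bound without valley-filling. -/
def ZZ (P : Measure (Fin d → ℝ)) (κ : Kernel (Fin d → ℝ) 𝒴) (M : ℕ) : ℝ≥0∞ :=
  ∑ i : Fin d, ∫⁻ t in Set.Ioi (0 : ℝ),
    ENNReal.ofReal (t / 2) * (hFun P κ M t i / ((M : ℝ≥0∞) - 1))

/-- Ziv-Zakai bound with valley-filling. -/
def ZZbar (P : Measure (Fin d → ℝ)) (κ : Kernel (Fin d → ℝ) 𝒴) (M : ℕ) : ℝ≥0∞ :=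
  ∑ i : Fin d, ∫⁻ t in Set.Ioi (0 : ℝ),
    ENNReal.ofReal (t / 2) * ⨆ (u : ℝ) (_ : t ≤ u), hFun P κ M u i / ((M : ℝ≥0∞) - 1)

/-- The MMSE `∑_i E[(X_i - E[X_i|Y])²]` for `X ∼ P` and `Y|X=x ∼ κ(·|x)`, computed on the
joint law `P ⊗ₘ κ`; the conditional expectation is with respect to the σ-algebra
generated by `Y`. -/
def mmse (P : Measure (Fin d → ℝ)) (κ : Kernel (Fin d → ℝ) 𝒴) [SFinite P]
    [IsSFiniteKernel κ] : ℝ≥0∞ :=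
  ∑ i : Fin d, ∫⁻ p,
    ENNReal.ofReal ((p.1 i -
      (condExp (MeasurableSpace.comap Prod.snd inferInstance) (P.compProd κ)
        (fun q => q.1 i)) p) ^ 2) ∂(P.compProd κ)

open Set

lemma factor_snd {α β : Type*} [MeasurableSpace α] [MeasurableSpace β] [Nonempty α]
    {f : α × β → ℝ} (hf : Measurable[MeasurableSpace.comap Prod.snd inferInstance] f) :
    ∃ g : β → ℝ, Measurable g ∧ f = fun q => g q.2 := by
  obtain ⟨a₀⟩ := ‹Nonempty α›
  have hconst : ∀ a b, f (a, b) = f (a₀, b) := by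
    intro a b
    obtain ⟨S, -, hS⟩ :=
      MeasurableSpace.measurableSet_comap.mp (hf (measurableSet_singleton (f (a, b))))
    have h1 : (a, b) ∈ Prod.snd ⁻¹' S := by rw [hS]; exact rfl
    have h2 : (a₀, b) ∈ f ⁻¹' {f (a, b)} := by rw [← hS]; exact h1
    exact h2.symm
  refine ⟨fun b => f (a₀, b), ?_, ?_⟩
  · intro B hB
    obtain ⟨S, hSm, hS⟩ := MeasurableSpace.measurableSet_comap.mp (hf hB)
    have hset : (fun b => f (a₀, b)) ⁻¹' B = S := by
      ext b
      have : ((a₀, b) ∈ f ⁻¹' B) ↔ (a₀, b) ∈ Prod.snd ⁻¹' S := by rw [hS]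
      simpa using this.symm.symm
    rw [hset]; exact hSm
  · funext q
    calc f q = f (q.1, q.2) := by rfl
    _ = f (a₀, q.2) := hconst q.1 q.2

lemma mixMeasure_finite (P : Measure (Fin d → ℝ)) [IsProbabilityMeasure P]
    {M : ℕ} (U : Fin M → Fin d → ℝ) : IsFiniteMeasure (mixMeasure P U) := by
  constructor
  have hmeas : ∀ k : Fin M, Measurable fun x : Fin d → ℝ => x - U k := by
    intro k
    exact measurable_pi_lambda _ fun j => (measurable_pi_apply j).sub measurable_const
  have hk : ∀ k : Fin M, IsProbabilityMeasure (shiftLaw P (U k)) := fun k =>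
    Measure.isProbabilityMeasure_map (hmeas k).aemeasurable
  rw [mixMeasure, Measure.finset_sum_apply]
  have : ∀ k : Fin M, shiftLaw P (U k) Set.univ = 1 := fun k => (hk k).measure_univ
  simp only [this, Finset.sum_const, Finset.card_univ, Fintype.card_fin, nsmul_eq_mul, mul_one]
  exact ENNReal.natCast_lt_top M

lemma shiftLaw_ac (P : Measure (Fin d → ℝ)) {M : ℕ} (U : Fin M → Fin d → ℝ) (j : Fin M) :
    shiftLaw P (U j) ≪ mixMeasure P U := by
  refine Measure.absolutelyContinuous_of_le (Measure.le_iff.mpr fun s hs => ?_)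
  rw [mixMeasure, Measure.finset_sum_apply]
  exact Finset.single_le_sum (f := fun k => shiftLaw P (U k) s)
    (fun _ _ => zero_le) (Finset.mem_univ j)

lemma hFun_le (P : Measure (Fin d → ℝ)) [IsProbabilityMeasure P]
    (κ : Kernel (Fin d → ℝ) 𝒴) [IsMarkovKernel κ] {M : ℕ} (hM : 2 ≤ M)
    {gY : 𝒴 → ℝ} (hgY : Measurable gY) (i : Fin d) {t : ℝ} (ht : 0 < t) :
    hFun P κ M t i ≤ ((M : ℝ≥0∞) - 1) *
      (P.compProd κ) {q : (Fin d → ℝ) × 𝒴 | t / 2 ≤ |gY q.2 - q.1 i|} := by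
  refine iSup_le fun U => iSup_le fun hU => ?_
  -- the counting function
  set B : ℝ → ℝ → ℝ := fun a r => (r - a - t / 2) / t with hB_def
  set c : ℝ → ℝ → ℕ :=
    fun a r => if 0 ≤ B a r then min (M - 1) (⌊B a r⌋₊ + 1) else 0 with hc_def
  have hc_le : ∀ a r, c a r ≤ M - 1 := by
    intro a r
    by_cases h : 0 ≤ B a r <;> simp [hc_def, h]
  -- the decision rule
  set natFin : ℕ → Fin M := fun n => ⟨min n (M - 1), by omega⟩ with hnatFin_def
  set ψ : (Fin d → ℝ) → 𝒴 → Fin M := fun x y => natFin (c (x i) (gY y)) with hψ_def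
  have hψval : ∀ x y, (ψ x y : ℕ) = c (x i) (gY y) := by
    intro x y
    have := hc_le (x i) (gY y)
    simp only [hψ_def, hnatFin_def]
    omega
  have hψmeas : ∀ x, Measurable (ψ x) := by
    intro x
    have h1 : Measurable (fun y : 𝒴 => B (x i) (gY y)) :=
      ((hgY.sub measurable_const).sub measurable_const).div_const t
    have h2 : Measurable (fun b : ℝ => if 0 ≤ b then min (M - 1) (⌊b⌋₊ + 1) else 0) := by
      refine Measurable.ite measurableSet_Ici ?_ measurable_const
      exact (measurable_from_top (f := fun n : ℕ => min (M - 1) (n + 1))).comp Nat.measurable_floor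
    exact (measurable_from_top (f := natFin)).comp (h2.comp h1)
  -- key claims about the counting function
  have claimA : ∀ a r (j : ℕ), j < c a r → j < M - 1 ∧ a + j * t + t / 2 ≤ r := by
    intro a r j h
    by_cases hB : 0 ≤ B a r
    · simp only [hc_def, if_pos hB] at h
      refine ⟨lt_of_lt_of_le h (min_le_left _ _), ?_⟩
      have h2 : j < ⌊B a r⌋₊ + 1 := lt_of_lt_of_le h (min_le_right _ _)
      have h3 : (j : ℝ) ≤ B a r := (Nat.le_floor_iff hB).mp (by omega)
      rw [hB_def] at h3
      have h4 := (le_div_iff₀ ht).mp h3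
      linarith
    · simp only [hc_def, if_neg hB] at h
      omega
  have claimB : ∀ a r (j : ℕ), c a r < j → j ≤ M - 1 →
      1 ≤ j ∧ r < a + ((j : ℝ) - 1) * t + t / 2 := by
    intro a r j h hj
    have h0 : 1 ≤ j := by omega
    have hj1 : (1 : ℝ) ≤ (j : ℝ) := by exact_mod_cast h0
    refine ⟨h0, ?_⟩
    by_cases hB : 0 ≤ B a r
    · simp only [hc_def, if_pos hB] at h
      have h1 : ⌊B a r⌋₊ + 1 < j := by
        rcases min_lt_iff.mp h with h' | h'
        · omega
        · exact h'
      have h2 : ¬ ((j - 1 : ℕ) : ℝ) ≤ B a r := by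
        intro hcon
        have := Nat.le_floor hcon
        omega
      push_neg at h2
      have h2' : B a r < (j : ℝ) - 1 := by
        have : ((j - 1 : ℕ) : ℝ) = (j : ℝ) - 1 := by
          push_cast [Nat.cast_sub h0]
          ring
        linarith [this ▸ h2]
      rw [hB_def] at h2'
      have h4 := (div_lt_iff₀ ht).mp h2'
      linarith
    · push_neg at hB
      have hnum : r - a - t / 2 < 0 := by
        have := mul_neg_of_neg_of_pos hB ht
        rwa [hB_def, div_mul_cancel₀ _ ht.ne'] at this
      nlinarith [mul_nonneg (by linarith : (0:ℝ) ≤ (j : ℝ) - 1) ht.le]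

  -- product measurable sets
  set SA : Fin M → Set ((Fin d → ℝ) × 𝒴) :=
    fun j => {p | (j : ℕ) < M - 1 ∧ p.1 i + ((j : ℕ) : ℝ) * t + t / 2 ≤ gY p.2} with hSA_def
  set SB : Fin M → Set ((Fin d → ℝ) × 𝒴) :=
    fun j => {p | 1 ≤ (j : ℕ) ∧ gY p.2 < p.1 i + (((j : ℕ) : ℝ) - 1) * t + t / 2} with hSB_def
  have hSAm : ∀ j, MeasurableSet (SA j) := by
    intro j
    by_cases hj : (j : ℕ) < M - 1
    · simp only [hSA_def, hj, true_and]
      exact measurableSet_le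
        ((((measurable_pi_apply i).comp measurable_fst).add_const _).add_const _)
        (hgY.comp measurable_snd)
    · simp [hSA_def, hj]
  have hSBm : ∀ j, MeasurableSet (SB j) := by
    intro j
    by_cases hj : 1 ≤ (j : ℕ)
    · simp only [hSB_def, hj, true_and]
      exact measurableSet_lt (hgY.comp measurable_snd)
        ((((measurable_pi_apply i).comp measurable_fst).add_const _).add_const _)
    · simp [hSB_def, hj]
  -- inclusion of the error event
  have hsub : ∀ x (j : Fin M),
      {y | ψ x y ≠ j} ⊆ (Prod.mk x ⁻¹' SA j) ∪ (Prod.mk x ⁻¹' SB j) := by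
    intro x j y hy
    have hne : c (x i) (gY y) ≠ (j : ℕ) := by
      intro hc
      exact hy (Fin.ext (by rw [hψval]; exact hc))
    rcases lt_or_gt_of_ne hne with h | h
    · right
      have hjM : (j : ℕ) ≤ M - 1 := by have := j.isLt; omega
      obtain ⟨h1, h2⟩ := claimB (x i) (gY y) (j : ℕ) h hjM
      exact ⟨h1, h2⟩
    · left
      obtain ⟨h1, h2⟩ := claimA (x i) (gY y) (j : ℕ) h
      exact ⟨h1, h2⟩
  -- measurability of the kernel sections
  have haddmeas : ∀ j : Fin M, Measurable fun x : Fin d → ℝ => x + U j := fun j =>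
    measurable_pi_lambda _ fun l => (measurable_pi_apply l).add_const _
  have hGAm : ∀ j : Fin M, Measurable fun x => κ (x + U j) (Prod.mk x ⁻¹' SA j) := by
    intro j
    have h := ProbabilityTheory.Kernel.measurable_kernel_prodMk_left
      (κ := κ.comap (· + U j) (haddmeas j)) (hSAm j)
    simpa only [Kernel.comap_apply] using h
  have hGBm : ∀ j : Fin M, Measurable fun x => κ (x + U j) (Prod.mk x ⁻¹' SB j) := by
    intro j
    have h := ProbabilityTheory.Kernel.measurable_kernel_prodMk_left
      (κ := κ.comap (· + U j) (haddmeas j)) (hSBm j)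
    simpa only [Kernel.comap_apply] using h
  have hGm : ∀ j : Fin M, Measurable fun x =>
      κ (x + U j) (Prod.mk x ⁻¹' SA j) + κ (x + U j) (Prod.mk x ⁻¹' SB j) :=
    fun j => (hGAm j).add (hGBm j)
  -- pointwise bound on the Bayes error
  have hpt : ∀ x, bayesError P κ U x ≤
      ∑ j : Fin M, prior P U j x *
        (κ (x + U j) (Prod.mk x ⁻¹' SA j) + κ (x + U j) (Prod.mk x ⁻¹' SB j)) := by
    intro x
    rw [bayesError]
    refine le_trans (iInf₂_le (ψ x) (hψmeas x)) ?_
    refine Finset.sum_le_sum fun j _ => mul_le_mul_right ?_ _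
    exact (measure_mono (hsub x j)).trans (measure_union_le _ _)
  have step1 : ∫⁻ x, bayesError P κ U x ∂(mixMeasure P U) ≤
      ∑ j : Fin M, ∫⁻ x, prior P U j x *
        (κ (x + U j) (Prod.mk x ⁻¹' SA j) + κ (x + U j) (Prod.mk x ⁻¹' SB j))
        ∂(mixMeasure P U) := by
    refine (lintegral_mono hpt).trans (le_of_eq ?_)
    refine lintegral_finset_sum _ fun j _ => ?_
    exact (Measure.measurable_rnDeriv _ _).mul (hGm j)
  -- instances
  have hmeas_sub : ∀ j : Fin M, Measurable fun x : Fin d → ℝ => x - U j := fun j =>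
    measurable_pi_lambda _ fun l => (measurable_pi_apply l).sub measurable_const
  haveI hmixfin : IsFiniteMeasure (mixMeasure P U) := mixMeasure_finite P U
  have hprob : ∀ j : Fin M, IsProbabilityMeasure (shiftLaw P (U j)) := fun j =>
    Measure.isProbabilityMeasure_map (hmeas_sub j).aemeasurable
  -- change of measure: from the mixture to the shifted laws, then to `P`
  have step2 : ∀ j : Fin M, (∫⁻ x, prior P U j x *
        (κ (x + U j) (Prod.mk x ⁻¹' SA j) + κ (x + U j) (Prod.mk x ⁻¹' SB j))
        ∂(mixMeasure P U))
      = ∫⁻ x, κ (x - U j + U j) (Prod.mk (x - U j) ⁻¹' SA j)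
          + κ (x - U j + U j) (Prod.mk (x - U j) ⁻¹' SB j) ∂P := by
    intro j
    haveI := hprob j
    haveI : (shiftLaw P (U j)).HaveLebesgueDecomposition (mixMeasure P U) :=
      Measure.haveLebesgueDecomposition_of_sigmaFinite _ _
    rw [show (fun x => prior P U j x *
        (κ (x + U j) (Prod.mk x ⁻¹' SA j) + κ (x + U j) (Prod.mk x ⁻¹' SB j)))
      = fun x => (shiftLaw P (U j)).rnDeriv (mixMeasure P U) x *
        (κ (x + U j) (Prod.mk x ⁻¹' SA j) + κ (x + U j) (Prod.mk x ⁻¹' SB j)) from rfl]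
    rw [MeasureTheory.lintegral_rnDeriv_mul (shiftLaw_ac P U j) (hGm j).aemeasurable]
    rw [shiftLaw, lintegral_map (hGm j) (hmeas_sub j)]

  -- evaluate the integrals over `P`
  have hS1m : MeasurableSet {q : (Fin d → ℝ) × 𝒴 | q.1 i + t / 2 ≤ gY q.2} :=
    measurableSet_le (((measurable_pi_apply i).comp measurable_fst).add_const _)
      (hgY.comp measurable_snd)
  have hS2m : MeasurableSet {q : (Fin d → ℝ) × 𝒴 | gY q.2 < q.1 i - t / 2} :=
    measurableSet_lt (hgY.comp measurable_snd)
      (((measurable_pi_apply i).comp measurable_fst).sub_const _)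
  have hka : Measurable fun x : Fin d → ℝ => κ x {y | x i + t / 2 ≤ gY y} := by
    have h := ProbabilityTheory.Kernel.measurable_kernel_prodMk_left (κ := κ) hS1m
    simpa only [Set.preimage_setOf_eq] using h
  have step3 : ∀ j : Fin M, (∫⁻ x, κ (x - U j + U j) (Prod.mk (x - U j) ⁻¹' SA j)
          + κ (x - U j + U j) (Prod.mk (x - U j) ⁻¹' SB j) ∂P)
      = (if (j : ℕ) < M - 1 then ∫⁻ x, κ x {y | x i + t / 2 ≤ gY y} ∂P else 0) +
        (if 1 ≤ (j : ℕ) then ∫⁻ x, κ x {y | gY y < x i - t / 2} ∂P else 0) := by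
    intro j
    have hxx : ∀ x : Fin d → ℝ, x - U j + U j = x := fun x => sub_add_cancel x (U j)
    have hAAshift : ∀ x : Fin d → ℝ, (Prod.mk (x - U j) ⁻¹' SA j)
        = {y | (j : ℕ) < M - 1 ∧ x i + t / 2 ≤ gY y} := by
      intro x
      ext y
      simp only [hSA_def, Set.mem_preimage, Set.mem_setOf_eq]
      have hcoord : (x - U j) i + ((j : ℕ) : ℝ) * t + t / 2 = x i + t / 2 := by
        have h := hU j
        simp only [Pi.sub_apply]
        rw [h]
        ring
      rw [hcoord]
    have hBBshift : ∀ x : Fin d → ℝ, (Prod.mk (x - U j) ⁻¹' SB j)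
        = {y | 1 ≤ (j : ℕ) ∧ gY y < x i - t / 2} := by
      intro x
      ext y
      simp only [hSB_def, Set.mem_preimage, Set.mem_setOf_eq]
      have hcoord : (x - U j) i + (((j : ℕ) : ℝ) - 1) * t + t / 2 = x i - t / 2 := by
        have h := hU j
        simp only [Pi.sub_apply]
        rw [h]
        ring
      rw [hcoord]
    simp_rw [hxx, hAAshift, hBBshift]
    by_cases hj1 : (j : ℕ) < M - 1 <;> by_cases hj2 : 1 ≤ (j : ℕ)
    · rw [if_pos hj1, if_pos hj2]
      have e1 : ∀ x : Fin d → ℝ, {y | (j : ℕ) < M - 1 ∧ x i + t / 2 ≤ gY y}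
          = {y | x i + t / 2 ≤ gY y} := fun x => by ext y; simp [hj1]
      have e2 : ∀ x : Fin d → ℝ, {y | 1 ≤ (j : ℕ) ∧ gY y < x i - t / 2}
          = {y | gY y < x i - t / 2} := fun x => by ext y; simp [hj2]
      simp_rw [e1, e2]
      exact lintegral_add_left hka _
    · rw [if_pos hj1, if_neg hj2, add_zero]
      have e1 : ∀ x : Fin d → ℝ, {y | (j : ℕ) < M - 1 ∧ x i + t / 2 ≤ gY y}
          = {y | x i + t / 2 ≤ gY y} := fun x => by ext y; simp [hj1]
      have e2 : ∀ x : Fin d → ℝ, {y | 1 ≤ (j : ℕ) ∧ gY y < x i - t / 2}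
          = (∅ : Set 𝒴) := fun x => by ext y; simp [hj2]
      simp_rw [e1, e2, measure_empty, add_zero]
    · rw [if_neg hj1, if_pos hj2, zero_add]
      have e1 : ∀ x : Fin d → ℝ, {y | (j : ℕ) < M - 1 ∧ x i + t / 2 ≤ gY y}
          = (∅ : Set 𝒴) := fun x => by ext y; simp [hj1]
      have e2 : ∀ x : Fin d → ℝ, {y | 1 ≤ (j : ℕ) ∧ gY y < x i - t / 2}
          = {y | gY y < x i - t / 2} := fun x => by ext y; simp [hj2]
      simp_rw [e1, e2, measure_empty, zero_add]
    · rw [if_neg hj1, if_neg hj2, add_zero]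
      have e1 : ∀ x : Fin d → ℝ, {y | (j : ℕ) < M - 1 ∧ x i + t / 2 ≤ gY y}
          = (∅ : Set 𝒴) := fun x => by ext y; simp [hj1]
      have e2 : ∀ x : Fin d → ℝ, {y | 1 ≤ (j : ℕ) ∧ gY y < x i - t / 2}
          = (∅ : Set 𝒴) := fun x => by ext y; simp [hj2]
      simp_rw [e1, e2, measure_empty, add_zero]
      exact lintegral_zero
  -- counting
  have hcard1 : (Finset.univ.filter fun j : Fin M => (j : ℕ) < M - 1).card = M - 1 := by
    have h2 : (Finset.univ.filter fun j : Fin M => ¬((j : ℕ) < M - 1))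
        = {(⟨M - 1, by omega⟩ : Fin M)} := by
      ext j
      have := j.isLt
      simp only [Finset.mem_filter, Finset.mem_univ, true_and, Finset.mem_singleton,
        Fin.ext_iff]
      omega
    have h3 := Finset.card_filter_add_card_filter_not
      (s := (Finset.univ : Finset (Fin M))) (p := fun j : Fin M => (j : ℕ) < M - 1)
    rw [h2] at h3
    simp only [Finset.card_singleton, Finset.card_univ, Fintype.card_fin] at h3
    omega
  have hcard2 : (Finset.univ.filter fun j : Fin M => 1 ≤ (j : ℕ)).card = M - 1 := by
    have h2 : (Finset.univ.filter fun j : Fin M => ¬(1 ≤ (j : ℕ)))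
        = {(⟨0, by omega⟩ : Fin M)} := by
      ext j
      simp only [Finset.mem_filter, Finset.mem_univ, true_and, Finset.mem_singleton,
        Fin.ext_iff]
      omega
    have h3 := Finset.card_filter_add_card_filter_not
      (s := (Finset.univ : Finset (Fin M))) (p := fun j : Fin M => 1 ≤ (j : ℕ))
    rw [h2] at h3
    simp only [Finset.card_singleton, Finset.card_univ, Fintype.card_fin] at h3
    omega
  have hcount : ∀ (p : Fin M → Prop) [DecidablePred p] (hc : (Finset.univ.filter p).card = M - 1)
      (γ : ℝ≥0∞), (∑ j : Fin M, if p j then γ else 0) = ((M - 1 : ℕ) : ℝ≥0∞) * γ := by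
    intro p _ hc γ
    rw [← Finset.sum_filter, Finset.sum_const, hc, nsmul_eq_mul]
  -- put everything together
  set α : ℝ≥0∞ := ∫⁻ x, κ x {y | x i + t / 2 ≤ gY y} ∂P with hα_def
  set β : ℝ≥0∞ := ∫⁻ x, κ x {y | gY y < x i - t / 2} ∂P with hβ_def
  have hαν : α = (P.compProd κ) {q : (Fin d → ℝ) × 𝒴 | q.1 i + t / 2 ≤ gY q.2} := by
    rw [Measure.compProd_apply hS1m, hα_def]
    simp only [Set.preimage_setOf_eq]
  have hβν : β = (P.compProd κ) {q : (Fin d → ℝ) × 𝒴 | gY q.2 < q.1 i - t / 2} := by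
    rw [Measure.compProd_apply hS2m, hβ_def]
    simp only [Set.preimage_setOf_eq]
  have hdisj : Disjoint {q : (Fin d → ℝ) × 𝒴 | q.1 i + t / 2 ≤ gY q.2}
      {q : (Fin d → ℝ) × 𝒴 | gY q.2 < q.1 i - t / 2} := by
    rw [Set.disjoint_left]
    intro q h1 h2
    simp only [Set.mem_setOf_eq] at h1 h2
    linarith
  have hunion : α + β ≤ (P.compProd κ) {q : (Fin d → ℝ) × 𝒴 | t / 2 ≤ |gY q.2 - q.1 i|} := by
    rw [hαν, hβν, ← measure_union hdisj hS2m]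
    refine measure_mono fun q hq => ?_
    rcases hq with h | h
    · simp only [Set.mem_setOf_eq] at h ⊢
      calc t / 2 ≤ gY q.2 - q.1 i := by linarith
      _ ≤ |gY q.2 - q.1 i| := le_abs_self _
    · simp only [Set.mem_setOf_eq] at h ⊢
      calc t / 2 ≤ -(gY q.2 - q.1 i) := by linarith
      _ ≤ |gY q.2 - q.1 i| := neg_le_abs _
  have hcast : ((M - 1 : ℕ) : ℝ≥0∞) = (M : ℝ≥0∞) - 1 := by
    rw [ENNReal.natCast_sub, Nat.cast_one]
  calc ∫⁻ x, bayesError P κ U x ∂(mixMeasure P U)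
      ≤ ∑ j : Fin M, ∫⁻ x, prior P U j x *
          (κ (x + U j) (Prod.mk x ⁻¹' SA j) + κ (x + U j) (Prod.mk x ⁻¹' SB j))
          ∂(mixMeasure P U) := step1
    _ = ∑ j : Fin M, ((if (j : ℕ) < M - 1 then α else 0) + (if 1 ≤ (j : ℕ) then β else 0)) :=
        Finset.sum_congr rfl fun j _ => (step2 j).trans (step3 j)
    _ = (∑ j : Fin M, if (j : ℕ) < M - 1 then α else 0)
        + (∑ j : Fin M, if 1 ≤ (j : ℕ) then β else 0) := Finset.sum_add_distrib
    _ = ((M - 1 : ℕ) : ℝ≥0∞) * α + ((M - 1 : ℕ) : ℝ≥0∞) * β := by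
        rw [hcount _ hcard1 α, hcount _ hcard2 β]
    _ = ((M - 1 : ℕ) : ℝ≥0∞) * (α + β) := (mul_add _ _ _).symm
    _ ≤ ((M - 1 : ℕ) : ℝ≥0∞) *
        (P.compProd κ) {q : (Fin d → ℝ) × 𝒴 | t / 2 ≤ |gY q.2 - q.1 i|} :=
        mul_le_mul_right hunion _
    _ = ((M : ℝ≥0∞) - 1) *
        (P.compProd κ) {q : (Fin d → ℝ) × 𝒴 | t / 2 ≤ |gY q.2 - q.1 i|} := by rw [hcast]

lemma coord_bound (P : Measure (Fin d → ℝ)) [IsProbabilityMeasure P]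
    (κ : Kernel (Fin d → ℝ) 𝒴) [IsMarkovKernel κ] {M : ℕ} (hM : 2 ≤ M) (i : Fin d) :
    (∫⁻ t in Set.Ioi (0 : ℝ), ENNReal.ofReal (t / 2) *
        ⨆ (u : ℝ) (_ : t ≤ u), hFun P κ M u i / ((M : ℝ≥0∞) - 1)) ≤
    ∫⁻ p, ENNReal.ofReal ((p.1 i -
      (condExp (MeasurableSpace.comap Prod.snd inferInstance) (P.compProd κ)
        (fun q => q.1 i)) p) ^ 2) ∂(P.compProd κ) := by
  have hsm : Measurable[MeasurableSpace.comap Prod.snd inferInstance]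
      (condExp (MeasurableSpace.comap Prod.snd inferInstance) (P.compProd κ)
        (fun q : (Fin d → ℝ) × 𝒴 => q.1 i)) :=
    stronglyMeasurable_condExp.measurable
  obtain ⟨gY, hgY, hfac⟩ := factor_snd hsm
  have hf_m : Measurable fun q : (Fin d → ℝ) × 𝒴 => |gY q.2 - q.1 i| :=
    ((hgY.comp measurable_snd).sub ((measurable_pi_apply i).comp measurable_fst)).abs
  have hrhs : (∫⁻ p, ENNReal.ofReal ((p.1 i -
      (condExp (MeasurableSpace.comap Prod.snd inferInstance) (P.compProd κ)
        (fun q => q.1 i)) p) ^ 2) ∂(P.compProd κ))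
      = ∫⁻ p, ENNReal.ofReal (|gY p.2 - p.1 i| ^ 2) ∂(P.compProd κ) := by
    refine lintegral_congr fun p => ?_
    rw [hfac, sq_abs]
    congr 1
    ring
  have lc := lintegral_rpow_eq_lintegral_meas_le_mul (P.compProd κ)
    (f := fun q : (Fin d → ℝ) × 𝒴 => 2 * |gY q.2 - q.1 i|)
    (ae_of_all _ fun q => by positivity) ((hf_m.const_mul 2).aemeasurable) two_pos
  have lhs_eq : (∫⁻ ω, ENNReal.ofReal ((2 * |gY ω.2 - ω.1 i|) ^ (2:ℝ)) ∂(P.compProd κ))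
      = 4 * ∫⁻ ω, ENNReal.ofReal (|gY ω.2 - ω.1 i| ^ 2) ∂(P.compProd κ) := by
    rw [← lintegral_const_mul' (4 : ℝ≥0∞) _ (by norm_num)]
    refine lintegral_congr fun ω => ?_
    rw [Real.rpow_two, show (2 * |gY ω.2 - ω.1 i|) ^ 2 = 4 * |gY ω.2 - ω.1 i| ^ 2 by ring,
      ENNReal.ofReal_mul (by norm_num : (0:ℝ) ≤ 4)]
    norm_num
  have lc2 : 4 * (∫⁻ ω, ENNReal.ofReal (|gY ω.2 - ω.1 i| ^ 2) ∂(P.compProd κ))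
      = 2 * ∫⁻ t in Set.Ioi (0:ℝ),
          (P.compProd κ) {a : (Fin d → ℝ) × 𝒴 | t ≤ 2 * |gY a.2 - a.1 i|}
            * ENNReal.ofReal t := by
    rw [← lhs_eq, lc, show ENNReal.ofReal (2:ℝ) = 2 by norm_num]
    congr 1
    refine lintegral_congr fun s => ?_
    norm_num
  have hA : (∫⁻ t in Set.Ioi (0:ℝ),
        (P.compProd κ) {a : (Fin d → ℝ) × 𝒴 | t ≤ 2 * |gY a.2 - a.1 i|}
          * ENNReal.ofReal t)
      = 2 * ∫⁻ ω, ENNReal.ofReal (|gY ω.2 - ω.1 i| ^ 2) ∂(P.compProd κ) := by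
    refine (ENNReal.mul_right_inj two_ne_zero ENNReal.ofNat_ne_top).mp ?_
    rw [← lc2]
    ring
  rw [hrhs]
  calc (∫⁻ t in Set.Ioi (0 : ℝ), ENNReal.ofReal (t / 2) *
        ⨆ (u : ℝ) (_ : t ≤ u), hFun P κ M u i / ((M : ℝ≥0∞) - 1))
      ≤ ∫⁻ t in Set.Ioi (0:ℝ), ENNReal.ofReal (t / 2) *
          (P.compProd κ) {a : (Fin d → ℝ) × 𝒴 | t ≤ 2 * |gY a.2 - a.1 i|} := by
        refine lintegral_mono_ae ?_
        filter_upwards [self_mem_ae_restrict measurableSet_Ioi] with t ht'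
        refine mul_le_mul_right ?_ _
        refine iSup₂_le fun u hu => ?_
        have hu0 : (0:ℝ) < u := lt_of_lt_of_le ht' hu
        refine ENNReal.div_le_of_le_mul ?_
        rw [mul_comm]
        refine le_trans (hFun_le P κ hM hgY i hu0)
          (mul_le_mul_right (measure_mono fun q hq => ?_) _)
        simp only [Set.mem_setOf_eq] at hq ⊢
        linarith
    _ = 2⁻¹ * ∫⁻ t in Set.Ioi (0:ℝ),
          (P.compProd κ) {a : (Fin d → ℝ) × 𝒴 | t ≤ 2 * |gY a.2 - a.1 i|}
            * ENNReal.ofReal t := by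
        rw [← lintegral_const_mul' (2⁻¹ : ℝ≥0∞) _
          (ENNReal.inv_ne_top.mpr two_ne_zero)]
        refine lintegral_congr_ae ?_
        filter_upwards [self_mem_ae_restrict measurableSet_Ioi] with t ht'
        rw [ENNReal.ofReal_div_of_pos (by norm_num : (0:ℝ) < 2),
          show ENNReal.ofReal (2:ℝ) = 2 by norm_num, div_eq_mul_inv]
        ring
    _ = ∫⁻ ω, ENNReal.ofReal (|gY ω.2 - ω.1 i| ^ 2) ∂(P.compProd κ) := by
        rw [hA, ← mul_assoc, ENNReal.inv_mul_cancel two_ne_zero ENNReal.ofNat_ne_top, one_mul]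

/-- **Ziv–Zakai bound with valley-filling, arbitrary input distribution.**
For every `d ≥ 1`, every probability measure `P` on `ℝ^d`, every Markov kernel `κ`,
and every integer `M ≥ 2`, `mmse(X|Y) ≥ ZZ̄(P, κ, M)`. -/
theorem ziv_zakai_bound_with_valley_filling
    {d : ℕ} (hd : 1 ≤ d) {𝒴 : Type*} [MeasurableSpace 𝒴]
    (P : Measure (Fin d → ℝ)) [IsProbabilityMeasure P]
    (κ : Kernel (Fin d → ℝ) 𝒴) [IsMarkovKernel κ]
    (M : ℕ) (hM : 2 ≤ M) :
    ZZbar P κ M ≤ mmse P κ := by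
  rw [ZZbar, mmse]
  exact Finset.sum_le_sum fun i _ => coord_bound P κ hM i
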